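/- Let N ≥ 1, α ∈ (0,N), p > 0, γ < 0, τ ≥ 0, s > 1, c > 0 with α + pγ < 0 and p|γ| < N. Suppose 0 ≤ f(y) ≤ c|y|^γ log^τ(s|y|) for |y| ≥ 1. Then there exists C > 0 such that for all |x| ≥ 1: ∫_{|y|≥1} f(y)^p/|x-y|^{N-α} dy ≤ C |x|^{α+pγ} log^{pτ}(s|x|). -/

import Mathlib

open MeasureTheory Metric Set
open scoped ENNReal

private lemma aux_meas (N : ℕ) (t : ℝ) :
    Measurable fun z : EuclideanSpace ℝ (Fin N) => ENNReal.ofReal (‖z‖ ^ t) := by fun_prop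

private lemma aux_scale (N : ℕ) {R : ℝ} (t : ℝ) (hR : 0 < R) (S : Set (EuclideanSpace ℝ (Fin N)))
    (hS : MeasurableSet S) :
    ∫⁻ y in S, ENNReal.ofReal (‖y‖ ^ t) =
      ENNReal.ofReal (R ^ ((N : ℝ) + t)) *
        ∫⁻ z in (fun z : EuclideanSpace ℝ (Fin N) => R • z) ⁻¹' S, ENNReal.ofReal (‖z‖ ^ t) := by
  have hRn : R ≠ 0 := hR.ne'
  have hmap := Measure.map_addHaar_smul (volume : Measure (EuclideanSpace ℝ (Fin N))) hRn
  have hmeas := aux_meas N t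
  have h1 : ∫⁻ y in S, ENNReal.ofReal (‖y‖ ^ t)
      ∂(Measure.map (fun z : EuclideanSpace ℝ (Fin N) => R • z) volume) =
      ∫⁻ z in (fun z : EuclideanSpace ℝ (Fin N) => R • z) ⁻¹' S,
        ENNReal.ofReal (‖R • z‖ ^ t) := by
    exact setLIntegral_map hS hmeas (measurable_const_smul R)
  rw [hmap] at h1
  have hfr : Module.finrank ℝ (EuclideanSpace ℝ (Fin N)) = N := finrank_euclideanSpace_fin
  rw [hfr] at h1
  rw [Measure.restrict_smul, lintegral_smul_measure, abs_inv] at h1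
  have h2 : ∀ z : EuclideanSpace ℝ (Fin N),
      ENNReal.ofReal (‖R • z‖ ^ t) = ENNReal.ofReal (R ^ t) * ENNReal.ofReal (‖z‖ ^ t) := by
    intro z
    rw [norm_smul, Real.norm_eq_abs, abs_of_pos hR, Real.mul_rpow hR.le (norm_nonneg z),
      ENNReal.ofReal_mul (Real.rpow_nonneg hR.le t)]
  simp_rw [h2] at h1
  rw [lintegral_const_mul _ hmeas] at h1
  have h3 : (ENNReal.ofReal (R ^ ((N:ℝ))) * ENNReal.ofReal (|(R ^ N : ℝ)|⁻¹)) = 1 := by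
    rw [abs_of_pos (pow_pos hR N), ← Real.rpow_natCast R N, ← ENNReal.ofReal_mul
      (Real.rpow_nonneg hR.le _), mul_inv_cancel₀ (Real.rpow_pos_of_pos hR _).ne']
    exact ENNReal.ofReal_one
  calc ∫⁻ y in S, ENNReal.ofReal (‖y‖ ^ t) =
      (ENNReal.ofReal (R ^ ((N:ℝ))) * ENNReal.ofReal (|(R ^ N : ℝ)|⁻¹)) *
        ∫⁻ y in S, ENNReal.ofReal (‖y‖ ^ t) := by rw [h3, one_mul]
    _ = ENNReal.ofReal (R ^ ((N:ℝ))) * (ENNReal.ofReal (|(R ^ N : ℝ)|⁻¹) *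
        ∫⁻ y in S, ENNReal.ofReal (‖y‖ ^ t)) := by ring
    _ = ENNReal.ofReal (R ^ ((N:ℝ))) * (ENNReal.ofReal (R ^ t) *
        ∫⁻ z in (fun z : EuclideanSpace ℝ (Fin N) => R • z) ⁻¹' S, ENNReal.ofReal (‖z‖ ^ t)) := by
      simp only [smul_eq_mul] at h1; rw [h1]
    _ = _ := by
      rw [Real.rpow_add hR, ENNReal.ofReal_mul (Real.rpow_nonneg hR.le _), mul_assoc]

private lemma aux_translate (N : ℕ) (x : EuclideanSpace ℝ (Fin N)) (R t : ℝ) :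
    ∫⁻ y in closedBall x R, ENNReal.ofReal (‖x - y‖ ^ t) =
      ∫⁻ z in closedBall (0 : EuclideanSpace ℝ (Fin N)) R, ENNReal.ofReal (‖z‖ ^ t) := by
  have hmp : MeasurePreserving (fun z : EuclideanSpace ℝ (Fin N) => x - z) volume volume := by
    have h := (measurePreserving_add_left (volume : Measure (EuclideanSpace ℝ (Fin N))) x).comp
      (Measure.measurePreserving_neg volume)
    simpa [Function.comp_def, sub_eq_add_neg] using h
  have h := hmp.setLIntegral_comp_preimage (s := closedBall (0 : EuclideanSpace ℝ (Fin N)) R)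
    measurableSet_closedBall (aux_meas N t)
  have hpre : (fun z : EuclideanSpace ℝ (Fin N) => x - z) ⁻¹'
      closedBall (0 : EuclideanSpace ℝ (Fin N)) R = closedBall x R := by
    ext z
    simp [mem_closedBall, dist_eq_norm, norm_sub_rev x z]
  rw [hpre] at h
  exact h

private lemma aux_Kout (N : ℕ) {t : ℝ} (ht : (N : ℝ) < t) :
    ∫⁻ z in {z : EuclideanSpace ℝ (Fin N) | 1 ≤ ‖z‖}, ENNReal.ofReal (‖z‖ ^ (-t)) < ∞ := by
  have hfr : Module.finrank ℝ (EuclideanSpace ℝ (Fin N)) = N := finrank_euclideanSpace_fin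
  have hfin : (∫⁻ z : EuclideanSpace ℝ (Fin N), ENNReal.ofReal ((1 + ‖z‖) ^ (-t))) < ∞ := by
    apply finite_integral_one_add_norm
    rw [hfr]; exact ht
  have hmS : MeasurableSet {z : EuclideanSpace ℝ (Fin N) | 1 ≤ ‖z‖} :=
    measurableSet_le measurable_const measurable_norm
  have hpt : ∀ z ∈ {z : EuclideanSpace ℝ (Fin N) | 1 ≤ ‖z‖},
      ENNReal.ofReal (‖z‖ ^ (-t)) ≤ ENNReal.ofReal ((2:ℝ) ^ t * (1 + ‖z‖) ^ (-t)) := by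
    intro z hz
    have hz1 : (1:ℝ) ≤ ‖z‖ := hz
    apply ENNReal.ofReal_le_ofReal
    have h1 : (2 * ‖z‖ : ℝ) ^ (-t) ≤ (1 + ‖z‖) ^ (-t) :=
      Real.rpow_le_rpow_of_nonpos (by linarith) (by linarith) (by linarith)
    have h2 : (2 * ‖z‖ : ℝ) ^ (-t) = 2 ^ (-t) * ‖z‖ ^ (-t) :=
      Real.mul_rpow (by norm_num) (norm_nonneg z)
    have h3 : (0:ℝ) < 2 ^ t := Real.rpow_pos_of_pos (by norm_num) t
    have h4 : (2:ℝ) ^ (-t) * 2 ^ t = 1 := by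
      rw [← Real.rpow_add (by norm_num)]; simp
    calc ‖z‖ ^ (-t) = 2 ^ t * ((2:ℝ)^(-t) * ‖z‖ ^ (-t)) := by
          rw [← mul_assoc, mul_comm ((2:ℝ)^t), h4, one_mul]
      _ = 2 ^ t * (2 * ‖z‖ : ℝ) ^ (-t) := by rw [h2]
      _ ≤ 2 ^ t * (1 + ‖z‖) ^ (-t) := by
          exact mul_le_mul_of_nonneg_left h1 h3.le
  calc ∫⁻ z in {z : EuclideanSpace ℝ (Fin N) | 1 ≤ ‖z‖}, ENNReal.ofReal (‖z‖ ^ (-t))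
      ≤ ∫⁻ z in {z : EuclideanSpace ℝ (Fin N) | 1 ≤ ‖z‖},
          ENNReal.ofReal ((2:ℝ) ^ t * (1 + ‖z‖) ^ (-t)) := setLIntegral_mono' hmS hpt
    _ ≤ ∫⁻ z : EuclideanSpace ℝ (Fin N), ENNReal.ofReal ((2:ℝ) ^ t * (1 + ‖z‖) ^ (-t)) :=
        setLIntegral_le_lintegral _ _
    _ = ∫⁻ z : EuclideanSpace ℝ (Fin N),
          ENNReal.ofReal ((2:ℝ) ^ t) * ENNReal.ofReal ((1 + ‖z‖) ^ (-t)) := by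
        congr 1; ext z; rw [ENNReal.ofReal_mul (Real.rpow_nonneg (by norm_num) t)]
    _ = ENNReal.ofReal ((2:ℝ) ^ t) * ∫⁻ z : EuclideanSpace ℝ (Fin N),
          ENNReal.ofReal ((1 + ‖z‖) ^ (-t)) := by
        rw [lintegral_const_mul]; fun_prop
    _ < ∞ := ENNReal.mul_lt_top ENNReal.ofReal_lt_top hfin

private lemma aux_Kin (N : ℕ) {u : ℝ} (hu0 : 0 < u) (hu : u < N) :
    ∫⁻ z in closedBall (0 : EuclideanSpace ℝ (Fin N)) 1, ENNReal.ofReal (‖z‖ ^ (-u)) < ∞ := by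
  have hfr : Module.finrank ℝ (EuclideanSpace ℝ (Fin N)) = N := finrank_euclideanSpace_fin
  set r : ℝ := 2⁻¹ with hr
  have hr0 : (0:ℝ) < r := by norm_num
  have hr1 : r < 1 := by norm_num
  set A : ℕ → Set (EuclideanSpace ℝ (Fin N)) :=
    fun k => {z | r ^ (k+1) < ‖z‖ ∧ ‖z‖ ≤ r ^ k} with hA
  have hcover : closedBall (0 : EuclideanSpace ℝ (Fin N)) 1 ⊆ {0} ∪ ⋃ k, A k := by
    intro z hz
    rcases eq_or_ne z 0 with rfl | hz0
    · exact Or.inl rfl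
    right
    have hzpos : 0 < ‖z‖ := norm_pos_iff.mpr hz0
    have hz1 : ‖z‖ ≤ 1 := by simpa [mem_closedBall, dist_zero_right] using hz
    have hex : ∃ m, r ^ (m+1) < ‖z‖ := by
      obtain ⟨m, hm⟩ := exists_pow_lt_of_lt_one hzpos hr1
      exact ⟨m, lt_of_le_of_lt (pow_le_pow_of_le_one hr0.le hr1.le (by omega)) hm⟩
    classical
    let k := Nat.find hex
    refine mem_iUnion.mpr ⟨k, Nat.find_spec hex, ?_⟩
    rcases Nat.eq_zero_or_pos k with hk0 | hkpos
    · simpa [hk0] using hz1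
    · have := Nat.find_min hex (m := k - 1) (by omega)
      push_neg at this
      have : ‖z‖ ≤ r ^ (k - 1 + 1) := this
      simpa [Nat.sub_add_cancel hkpos] using this
  have hAm : ∀ k, MeasurableSet (A k) := fun k =>
    (measurableSet_lt measurable_const measurable_norm).inter
      (measurableSet_le measurable_norm measurable_const)
  have hN0 : 0 < N := by exact_mod_cast hu0.trans hu
  haveI : Nontrivial (EuclideanSpace ℝ (Fin N)) :=
    Module.nontrivial_of_finrank_pos (R := ℝ) (by rw [finrank_euclideanSpace_fin]; exact hN0)
  set V := volume (ball (0 : EuclideanSpace ℝ (Fin N)) 1) with hV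
  have hVfin : V < ∞ := measure_ball_lt_top
  have hAk : ∀ k, ∫⁻ z in A k, ENNReal.ofReal (‖z‖ ^ (-u)) ≤
      ENNReal.ofReal (r ^ (-u) * (r ^ ((N:ℝ) - u)) ^ k) * V := by
    intro k
    have hb : ∀ z ∈ A k, ENNReal.ofReal (‖z‖ ^ (-u)) ≤
        ENNReal.ofReal ((r ^ (k+1) : ℝ) ^ (-u)) := by
      intro z hz
      exact ENNReal.ofReal_le_ofReal
        (Real.rpow_le_rpow_of_nonpos (pow_pos hr0 _) hz.1.le (by linarith))
    calc ∫⁻ z in A k, ENNReal.ofReal (‖z‖ ^ (-u))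
        ≤ ∫⁻ _ in A k, ENNReal.ofReal ((r ^ (k+1) : ℝ) ^ (-u)) := setLIntegral_mono' (hAm k) hb
      _ = ENNReal.ofReal ((r ^ (k+1) : ℝ) ^ (-u)) * volume (A k) := setLIntegral_const _ _
      _ ≤ ENNReal.ofReal ((r ^ (k+1) : ℝ) ^ (-u)) *
            (ENNReal.ofReal ((r ^ k) ^ N) * V) := by
          apply mul_le_mul_right
          have hsub : A k ⊆ closedBall (0 : EuclideanSpace ℝ (Fin N)) (r ^ k) := by
            intro z hz
            simpa [mem_closedBall, dist_zero_right] using hz.2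
          calc volume (A k) ≤ volume (closedBall (0 : EuclideanSpace ℝ (Fin N)) (r ^ k)) :=
                measure_mono hsub
            _ = ENNReal.ofReal ((r ^ k) ^ N) * V := by
                rw [Measure.addHaar_closedBall _ _ (pow_nonneg hr0.le k), hfr]
      _ = ENNReal.ofReal (r ^ (-u) * (r ^ ((N:ℝ) - u)) ^ k) * V := by
          rw [← mul_assoc, ← ENNReal.ofReal_mul (Real.rpow_nonneg (pow_nonneg hr0.le _) _)]
          congr 2
          have e1 : ((r ^ (k+1) : ℝ)) ^ (-u) = r ^ ((((k+1) : ℕ) : ℝ) * (-u)) := by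
            rw [← Real.rpow_natCast r (k+1), ← Real.rpow_mul hr0.le]
          have e2 : ((r ^ k : ℝ)) ^ N = r ^ (((k : ℝ)) * N) := by
            rw [← Real.rpow_natCast r k, ← Real.rpow_natCast (r ^ ((k : ℕ) : ℝ)) N,
              ← Real.rpow_mul hr0.le]
          have e3 : ((r ^ ((N:ℝ) - u)) : ℝ) ^ k = r ^ (((N:ℝ) - u) * k) := by
            rw [← Real.rpow_natCast (r ^ ((N:ℝ) - u)) k, ← Real.rpow_mul hr0.le]
          rw [e1, e2, e3, ← Real.rpow_add hr0, ← Real.rpow_add hr0]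
          congr 1
          push_cast
          ring
  set q : ℝ≥0∞ := ENNReal.ofReal (r ^ ((N:ℝ) - u)) with hq
  have hq1 : q < 1 := by
    rw [hq, ← ENNReal.ofReal_one]
    exact ENNReal.ofReal_lt_ofReal_iff_of_nonneg (Real.rpow_nonneg hr0.le _) |>.mpr
      (Real.rpow_lt_one hr0.le hr1 (by linarith))
  calc ∫⁻ z in closedBall (0 : EuclideanSpace ℝ (Fin N)) 1, ENNReal.ofReal (‖z‖ ^ (-u))
      ≤ ∫⁻ z in ({0} ∪ ⋃ k, A k : Set (EuclideanSpace ℝ (Fin N))),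
          ENNReal.ofReal (‖z‖ ^ (-u)) := lintegral_mono_set hcover
    _ ≤ (∫⁻ z in ({0} : Set (EuclideanSpace ℝ (Fin N))), ENNReal.ofReal (‖z‖ ^ (-u))) +
          ∫⁻ z in (⋃ k, A k), ENNReal.ofReal (‖z‖ ^ (-u)) := lintegral_union_le _ _ _
    _ ≤ 0 + ∑' k, ∫⁻ z in A k, ENNReal.ofReal (‖z‖ ^ (-u)) := by
        gcongr
        · rw [setLIntegral_measure_zero _ _ (measure_singleton 0)]
        · exact lintegral_iUnion_le _ _
    _ ≤ ∑' k, ENNReal.ofReal (r ^ (-u) * (r ^ ((N:ℝ) - u)) ^ k) * V := by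
        rw [zero_add]; exact ENNReal.tsum_le_tsum hAk
    _ = (ENNReal.ofReal (r ^ (-u)) * V) * ∑' k, q ^ k := by
        have he : ∀ k : ℕ, ENNReal.ofReal (r ^ (-u) * (r ^ ((N:ℝ) - u)) ^ k) * V =
            (ENNReal.ofReal (r ^ (-u)) * V) * q ^ k := by
          intro k
          rw [ENNReal.ofReal_mul (Real.rpow_nonneg hr0.le _),
            ENNReal.ofReal_pow (Real.rpow_nonneg hr0.le _)]
          ring
        simp_rw [he]
        exact ENNReal.tsum_mul_left
    _ < ∞ := by
        rw [ENNReal.tsum_geometric]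
        refine ENNReal.mul_lt_top (ENNReal.mul_lt_top ENNReal.ofReal_lt_top hVfin) ?_
        exact ENNReal.inv_lt_top.mpr (tsub_pos_of_lt hq1)

set_option maxHeartbeats 1000000 in
/-- If 0 ≤ f(y) ≤ c‖y‖^γ log^τ(s‖y‖) for ‖y‖ ≥ 1, with α+pγ<0 and p|γ|<N, then
∫_{‖y‖≥1} f(y)^p/‖x-y‖^(N-α) dy ≤ C‖x‖^(α+pγ) log^(pτ)(s‖x‖) for all ‖x‖ ≥ 1. -/
theorem stmt_9 (N : ℕ) (hN : 1 ≤ N) (α p γ τ s c : ℝ)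
    (hα0 : 0 < α) (hαN : α < N) (hp : 0 < p) (hγ : γ < 0) (hτ : 0 ≤ τ)
    (hs : 1 < s) (hc : 0 < c) (hpγ : α + p * γ < 0) (hpγN : p * |γ| < N)
    (f : EuclideanSpace ℝ (Fin N) → ℝ)
    (hf0 : ∀ y, 0 ≤ f y)
    (hf : ∀ y : EuclideanSpace ℝ (Fin N), 1 ≤ ‖y‖ →
      f y ≤ c * ‖y‖ ^ γ * Real.log (s * ‖y‖) ^ τ) :
    ∃ C : ℝ, 0 < C ∧ ∀ x : EuclideanSpace ℝ (Fin N), 1 ≤ ‖x‖ →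
      ∫⁻ y in {y : EuclideanSpace ℝ (Fin N) | 1 ≤ ‖y‖},
          ENNReal.ofReal (f y ^ p / ‖x - y‖ ^ ((N : ℝ) - α)) ≤
        ENNReal.ofReal (C * ‖x‖ ^ (α + p * γ) * Real.log (s * ‖x‖) ^ (p * τ)) := by
  classical
  have hL : 0 < Real.log s := Real.log_pos hs
  have hpγ0 : p * γ < 0 := mul_neg_of_pos_of_neg hp hγ
  have hpγN' : -(p * γ) < N := by rwa [abs_of_neg hγ, mul_neg] at hpγN
  set δ : ℝ := -(α + p * γ)/2 with hδdef
  have hδ0 : 0 < δ := by rw [hδdef]; linarith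
  have hpτ : 0 ≤ p * τ := mul_nonneg hp.le hτ
  set ε : ℝ := δ / (p * τ + 1) with hεdef
  have hε0 : 0 < ε := div_pos hδ0 (by linarith)
  have hεpτ : ε * (p * τ) ≤ δ := by
    rw [hεdef, div_mul_eq_mul_div, div_le_iff₀ (by linarith : (0:ℝ) < p * τ + 1)]
    exact mul_le_mul_of_nonneg_left (by linarith : p * τ ≤ p * τ + 1) hδ0.le
  have hεL : 0 < ε * Real.log s := mul_pos hε0 hL
  set t₁ : ℝ := p * γ + δ + α - N with ht₁
  have hK₁ : (∫⁻ z in {z : EuclideanSpace ℝ (Fin N) | 1 ≤ ‖z‖},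
      ENNReal.ofReal (‖z‖ ^ t₁)) < ∞ := by
    have h := aux_Kout N (t := -t₁) (by rw [ht₁]; push_cast; linarith)
    simpa using h
  have hK₂ : (∫⁻ z in closedBall (0 : EuclideanSpace ℝ (Fin N)) 1,
      ENNReal.ofReal (‖z‖ ^ (α - (N:ℝ)))) < ∞ := by
    have h := aux_Kin N (u := (N:ℝ) - α) (by linarith) (by linarith)
    simpa [neg_sub] using h
  have hK₃ : (∫⁻ z in closedBall (0 : EuclideanSpace ℝ (Fin N)) 1,
      ENNReal.ofReal (‖z‖ ^ (p * γ))) < ∞ := by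
    have h := aux_Kin N (u := -(p * γ)) (by linarith) (by linarith)
    simpa using h
  set KA : ℝ := (∫⁻ z in {z : EuclideanSpace ℝ (Fin N) | 1 ≤ ‖z‖},
      ENNReal.ofReal (‖z‖ ^ t₁)).toReal with hKA
  set KB : ℝ := (∫⁻ z in closedBall (0 : EuclideanSpace ℝ (Fin N)) 1,
      ENNReal.ofReal (‖z‖ ^ (α - (N:ℝ)))).toReal with hKB
  set KC : ℝ := (∫⁻ z in closedBall (0 : EuclideanSpace ℝ (Fin N)) 1,
      ENNReal.ofReal (‖z‖ ^ (p * γ))).toReal with hKC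
  have hKA0 : 0 ≤ KA := ENNReal.toReal_nonneg
  have hKB0 : 0 ≤ KB := ENNReal.toReal_nonneg
  have hKC0 : 0 ≤ KC := ENNReal.toReal_nonneg
  set Cep : ℝ := (1 + 1/(ε * Real.log s)) ^ (p * τ) with hCep
  have hCep0 : 0 ≤ Cep := Real.rpow_nonneg (by positivity) _
  set C₂ : ℝ := (1 + Real.log 2 / Real.log s) ^ (p * τ) with hC₂
  have h2L : 0 ≤ Real.log 2 / Real.log s := div_nonneg (Real.log_nonneg one_le_two) hL.le
  have hC₂0 : 0 ≤ C₂ := Real.rpow_nonneg (by linarith) _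
  set CA : ℝ := c ^ p * 2 ^ ((N:ℝ) - α) * Cep * 2 ^ (α + p * γ + δ) * KA with hCA
  set CB : ℝ := c ^ p * 2 ^ (-(p * γ)) * C₂ * 3 ^ α * KB with hCB
  set CC : ℝ := c ^ p * 2 ^ ((N:ℝ) - α) * KC with hCC
  have hcp : (0:ℝ) ≤ c ^ p := Real.rpow_nonneg hc.le _
  have hCA0 : 0 ≤ CA := by
    apply mul_nonneg _ hKA0
    exact mul_nonneg (mul_nonneg (mul_nonneg hcp (Real.rpow_nonneg (by norm_num) _)) hCep0)
      (Real.rpow_nonneg (by norm_num) _)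
  have hCB0 : 0 ≤ CB := by
    apply mul_nonneg _ hKB0
    exact mul_nonneg (mul_nonneg (mul_nonneg hcp (Real.rpow_nonneg (by norm_num) _)) hC₂0)
      (Real.rpow_nonneg (by norm_num) _)
  have hCC0 : 0 ≤ CC := by
    exact mul_nonneg (mul_nonneg hcp (Real.rpow_nonneg (by norm_num) _)) hKC0
  refine ⟨CA + CB + CC + 1, by linarith, ?_⟩
  intro x hx
  have hX0 : (0:ℝ) < ‖x‖ := lt_of_lt_of_le one_pos hx
  set X : ℝ := ‖x‖ with hXdef
  set lX : ℝ := Real.log (s * X) with hlXdef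
  have hlXL : Real.log s ≤ lX := by
    rw [hlXdef]
    apply Real.log_le_log (by linarith)
    exact le_mul_of_one_le_right (by linarith : (0:ℝ) ≤ s) hx
  have hlX0 : 0 < lX := lt_of_lt_of_le hL hlXL
  set SA : Set (EuclideanSpace ℝ (Fin N)) := {y | 2 * X ≤ ‖y‖} with hSAdef
  set SB : Set (EuclideanSpace ℝ (Fin N)) :=
    {y | 1 ≤ ‖y‖ ∧ X/2 ≤ ‖y‖ ∧ ‖y‖ ≤ 2 * X} with hSBdef
  set SC : Set (EuclideanSpace ℝ (Fin N)) := {y | 1 ≤ ‖y‖ ∧ ‖y‖ ≤ X/2} with hSCdef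
  have hSA : MeasurableSet SA := measurableSet_le measurable_const measurable_norm
  have hSB : MeasurableSet SB := by
    apply MeasurableSet.inter (measurableSet_le measurable_const measurable_norm)
    exact (measurableSet_le measurable_const measurable_norm).inter
      (measurableSet_le measurable_norm measurable_const)
  have hSC : MeasurableSet SC :=
    (measurableSet_le measurable_const measurable_norm).inter
      (measurableSet_le measurable_norm measurable_const)
  have hcover : {y : EuclideanSpace ℝ (Fin N) | 1 ≤ ‖y‖} ⊆ SA ∪ (SB ∪ SC) := by
    intro y hy
    have hy1 : (1:ℝ) ≤ ‖y‖ := hy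
    rcases le_or_gt (2 * X) ‖y‖ with h | h
    · exact Or.inl h
    rcases le_or_gt ‖y‖ (X/2) with h' | h'
    · exact Or.inr (Or.inr ⟨hy1, h'⟩)
    · exact Or.inr (Or.inl ⟨hy1, h'.le, h.le⟩)
  -- pointwise power bound
  have hfb : ∀ y : EuclideanSpace ℝ (Fin N), 1 ≤ ‖y‖ →
      f y ^ p ≤ c ^ p * ‖y‖ ^ (p * γ) * Real.log (s * ‖y‖) ^ (p * τ) := by
    intro y hy
    have hy0 : (0:ℝ) < ‖y‖ := lt_of_lt_of_le one_pos hy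
    have hsy : (1:ℝ) ≤ s * ‖y‖ :=
      hs.le.trans (le_mul_of_one_le_right (by linarith : (0:ℝ) ≤ s) hy)
    have hlog0 : 0 ≤ Real.log (s * ‖y‖) := Real.log_nonneg hsy
    have h := Real.rpow_le_rpow (hf0 y) (hf y hy) hp.le
    refine h.trans (le_of_eq ?_)
    rw [Real.mul_rpow (mul_nonneg hc.le (Real.rpow_nonneg hy0.le γ))
        (Real.rpow_nonneg hlog0 τ),
      Real.mul_rpow hc.le (Real.rpow_nonneg hy0.le γ),
      ← Real.rpow_mul hy0.le, ← Real.rpow_mul hlog0, mul_comm γ p, mul_comm τ p]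
  have hdiv : ∀ (a : ℝ) (y : EuclideanSpace ℝ (Fin N)),
      a / ‖x - y‖ ^ ((N:ℝ) - α) = a * ‖x - y‖ ^ (α - (N:ℝ)) := by
    intro a y
    rw [show (α - (N:ℝ)) = -((N:ℝ) - α) by ring, Real.rpow_neg (norm_nonneg _), div_eq_mul_inv]
  have hbodyA : ∫⁻ y in SA, ENNReal.ofReal (f y ^ p / ‖x - y‖ ^ ((N : ℝ) - α)) ≤
      ENNReal.ofReal (CA * X ^ (α + p * γ) * lX ^ (p * τ)) := by
    set MA : ℝ := c ^ p * 2 ^ ((N:ℝ) - α) * Cep * lX ^ (p * τ) * X ^ (-δ) with hMA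
    have hMA0 : 0 ≤ MA :=
      mul_nonneg (mul_nonneg (mul_nonneg (mul_nonneg hcp (Real.rpow_nonneg (by norm_num) _))
        hCep0) (Real.rpow_nonneg hlX0.le _)) (Real.rpow_nonneg hX0.le _)
    have h2X0 : (0:ℝ) < 2 * X := by linarith
    have hpt : ∀ y ∈ SA, ENNReal.ofReal (f y ^ p / ‖x - y‖ ^ ((N:ℝ) - α)) ≤
        ENNReal.ofReal (MA * ‖y‖ ^ t₁) := by
      intro y hy
      have h2X : 2 * X ≤ ‖y‖ := hy
      have hy1 : (1:ℝ) ≤ ‖y‖ := by linarith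
      have hy0 : (0:ℝ) < ‖y‖ := lt_of_lt_of_le one_pos hy1
      apply ENNReal.ofReal_le_ofReal
      rw [hdiv]
      have hsy1 : (1:ℝ) ≤ s * ‖y‖ :=
        hs.le.trans (le_mul_of_one_le_right (by linarith : (0:ℝ) ≤ s) hy1)
      have hlog0 : 0 ≤ Real.log (s * ‖y‖) := Real.log_nonneg hsy1
      -- bound on the kernel
      have hxy : ‖y‖/2 ≤ ‖x - y‖ := by
        have h := norm_sub_norm_le y x
        rw [norm_sub_rev] at h
        linarith
      have h2 : ‖x - y‖ ^ (α - (N:ℝ)) ≤ 2 ^ ((N:ℝ)-α) * ‖y‖ ^ (α-(N:ℝ)) := by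
        have h3 : ‖x - y‖ ^ (α - (N:ℝ)) ≤ (‖y‖/2) ^ (α-(N:ℝ)) :=
          Real.rpow_le_rpow_of_nonpos (by linarith) hxy (by linarith)
        have h4 : ((‖y‖/2):ℝ) ^ (α-(N:ℝ)) = 2 ^ ((N:ℝ)-α) * ‖y‖ ^ (α-(N:ℝ)) := by
          rw [Real.div_rpow hy0.le (by norm_num : (0:ℝ) ≤ 2),
            show (N:ℝ) - α = -(α - (N:ℝ)) by ring, Real.rpow_neg (by norm_num : (0:ℝ) ≤ 2)]
          ring
        exact h3.trans_eq h4
      -- bound on the logarithm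
      set u : ℝ := ‖y‖ / X with hu
      have hu0 : (0:ℝ) < u := div_pos hy0 hX0
      have hu1 : (1:ℝ) ≤ u := (one_le_div hX0).mpr (by linarith)
      have huε1 : (1:ℝ) ≤ u ^ ε := Real.one_le_rpow hu1 hε0.le
      have h3log : Real.log (s * ‖y‖) ^ (p * τ) ≤
          Cep * lX ^ (p * τ) * (‖y‖ ^ δ * X ^ (-δ)) := by
        have hry : s * ‖y‖ = (s * X) * u := by
          rw [hu]; field_simp
        have hlogeq : Real.log (s * ‖y‖) = lX + Real.log u := by
          rw [hry, Real.log_mul (by positivity : s * X ≠ 0) hu0.ne', hlXdef]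
        have hlogu : Real.log u ≤ u ^ ε / ε := Real.log_le_rpow_div hu0.le hε0
        have hfrac : 1/ε ≤ lX/(ε * Real.log s) := by
          rw [div_le_div_iff₀ hε0 hεL]
          calc 1 * (ε * Real.log s) = ε * Real.log s := one_mul _
            _ ≤ ε * lX := mul_le_mul_of_nonneg_left hlXL hε0.le
            _ = lX * ε := mul_comm _ _
        have hstep : u ^ ε / ε ≤ lX * (1/(ε * Real.log s)) * u ^ ε := by
          calc u ^ ε / ε = u ^ ε * (1/ε) := by ring
            _ ≤ u ^ ε * (lX/(ε * Real.log s)) :=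
                mul_le_mul_of_nonneg_left hfrac (Real.rpow_nonneg hu0.le _)
            _ = lX * (1/(ε * Real.log s)) * u ^ ε := by ring
        have hlx_le : lX ≤ lX * u ^ ε := le_mul_of_one_le_right hlX0.le huε1
        have hlogbound : Real.log (s * ‖y‖) ≤ lX * (1 + 1/(ε * Real.log s)) * u ^ ε := by
          calc Real.log (s * ‖y‖) = lX + Real.log u := hlogeq
            _ ≤ lX + u ^ ε / ε := by linarith
            _ ≤ lX * u ^ ε + lX * (1/(ε * Real.log s)) * u ^ ε := by linarith
            _ = lX * (1 + 1/(ε * Real.log s)) * u ^ ε := by ring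
        have hr1 := Real.rpow_le_rpow hlog0 hlogbound hpτ
        have hbase0 : (0:ℝ) ≤ 1 + 1/(ε * Real.log s) := by positivity
        rw [Real.mul_rpow (mul_nonneg hlX0.le hbase0) (Real.rpow_nonneg hu0.le _),
          Real.mul_rpow hlX0.le hbase0, ← Real.rpow_mul hu0.le, ← hCep] at hr1
        have hud : u ^ δ = ‖y‖ ^ δ * X ^ (-δ) := by
          rw [hu, Real.div_rpow (norm_nonneg y) hX0.le, Real.rpow_neg hX0.le, div_eq_mul_inv]
        calc Real.log (s * ‖y‖) ^ (p * τ) ≤ lX ^ (p * τ) * Cep * u ^ (ε * (p * τ)) := hr1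
          _ ≤ lX ^ (p * τ) * Cep * u ^ δ :=
              mul_le_mul_of_nonneg_left (Real.rpow_le_rpow_of_exponent_le hu1 hεpτ)
                (mul_nonneg (Real.rpow_nonneg hlX0.le _) hCep0)
          _ = Cep * lX ^ (p * τ) * (‖y‖ ^ δ * X ^ (-δ)) := by rw [hud]; ring
      -- combine pointwise
      have h1' : f y ^ p ≤ (c ^ p * ‖y‖ ^ (p * γ)) *
          (Cep * lX ^ (p * τ) * (‖y‖ ^ δ * X ^ (-δ))) := by
        refine (hfb y hy1).trans ?_
        calc c ^ p * ‖y‖ ^ (p * γ) * Real.log (s * ‖y‖) ^ (p * τ)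
            = (c ^ p * ‖y‖ ^ (p * γ)) * Real.log (s * ‖y‖) ^ (p * τ) := by ring
          _ ≤ (c ^ p * ‖y‖ ^ (p * γ)) * (Cep * lX ^ (p * τ) * (‖y‖ ^ δ * X ^ (-δ))) :=
              mul_le_mul_of_nonneg_left h3log (mul_nonneg hcp (Real.rpow_nonneg hy0.le _))
      calc f y ^ p * ‖x - y‖ ^ (α - (N:ℝ))
          ≤ ((c ^ p * ‖y‖ ^ (p * γ)) * (Cep * lX ^ (p * τ) * (‖y‖ ^ δ * X ^ (-δ)))) *
            (2 ^ ((N:ℝ)-α) * ‖y‖ ^ (α-(N:ℝ))) := by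
            apply mul_le_mul h1' h2 (Real.rpow_nonneg (norm_nonneg _) _)
            exact mul_nonneg (mul_nonneg hcp (Real.rpow_nonneg hy0.le _))
              (mul_nonneg (mul_nonneg hCep0 (Real.rpow_nonneg hlX0.le _))
                (mul_nonneg (Real.rpow_nonneg hy0.le _) (Real.rpow_nonneg hX0.le _)))
        _ = MA * ‖y‖ ^ t₁ := by
            have hyt : ‖y‖ ^ (p * γ) * ‖y‖ ^ δ * ‖y‖ ^ (α - (N:ℝ)) = ‖y‖ ^ t₁ := by
              rw [← Real.rpow_add hy0, ← Real.rpow_add hy0]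
              congr 1
              rw [ht₁]; ring
            rw [hMA, ← hyt]; ring
    have hpre : (fun z : EuclideanSpace ℝ (Fin N) => (2 * X) • z) ⁻¹' SA =
        {z : EuclideanSpace ℝ (Fin N) | 1 ≤ ‖z‖} := by
      ext z
      simp only [Set.mem_preimage, hSAdef, Set.mem_setOf_eq, norm_smul,
        Real.norm_eq_abs, abs_of_pos h2X0]
      constructor
      · intro h; exact (le_mul_iff_one_le_right h2X0).mp h
      · intro h; exact (le_mul_iff_one_le_right h2X0).mpr h
    calc ∫⁻ y in SA, ENNReal.ofReal (f y ^ p / ‖x - y‖ ^ ((N : ℝ) - α))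
        ≤ ∫⁻ y in SA, ENNReal.ofReal (MA * ‖y‖ ^ t₁) := setLIntegral_mono' hSA hpt
      _ = ENNReal.ofReal MA * ∫⁻ y in SA, ENNReal.ofReal (‖y‖ ^ t₁) := by
          simp_rw [ENNReal.ofReal_mul hMA0]
          rw [lintegral_const_mul _ (aux_meas N _)]
      _ = ENNReal.ofReal MA * (ENNReal.ofReal ((2 * X) ^ ((N:ℝ) + t₁)) *
            ∫⁻ z in {z : EuclideanSpace ℝ (Fin N) | 1 ≤ ‖z‖}, ENNReal.ofReal (‖z‖ ^ t₁)) := by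
          rw [aux_scale N t₁ h2X0 _ hSA, hpre]
      _ ≤ ENNReal.ofReal MA * (ENNReal.ofReal ((2 * X) ^ ((N:ℝ) + t₁)) *
            ENNReal.ofReal KA) := by
          gcongr
          exact (ENNReal.ofReal_toReal hK₁.ne).symm.le
      _ = ENNReal.ofReal (MA * (2 * X) ^ ((N:ℝ) + t₁) * KA) := by
          rw [ENNReal.ofReal_mul (mul_nonneg hMA0 (Real.rpow_nonneg h2X0.le _)),
            ENNReal.ofReal_mul hMA0, mul_assoc]
      _ ≤ ENNReal.ofReal (CA * X ^ (α + p * γ) * lX ^ (p * τ)) := by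
          apply ENNReal.ofReal_le_ofReal
          apply le_of_eq
          have he : (N:ℝ) + t₁ = α + p * γ + δ := by rw [ht₁]; ring
          have hXs : X ^ (-δ) * X ^ (α + p * γ + δ) = X ^ (α + p * γ) := by
            rw [← Real.rpow_add hX0]; congr 1; ring
          rw [he, Real.mul_rpow (by norm_num : (0:ℝ) ≤ 2) hX0.le, hMA, hCA, ← hXs]; ring
  have hbodyB : ∫⁻ y in SB, ENNReal.ofReal (f y ^ p / ‖x - y‖ ^ ((N : ℝ) - α)) ≤
      ENNReal.ofReal (CB * X ^ (α + p * γ) * lX ^ (p * τ)) := by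
    set MB : ℝ := c ^ p * 2 ^ (-(p * γ)) * X ^ (p * γ) * C₂ * lX ^ (p * τ) with hMB
    have hMB0 : 0 ≤ MB :=
      mul_nonneg (mul_nonneg (mul_nonneg (mul_nonneg hcp (Real.rpow_nonneg (by norm_num) _))
        (Real.rpow_nonneg hX0.le _)) hC₂0) (Real.rpow_nonneg hlX0.le _)
    have h3X0 : (0:ℝ) < 3 * X := by linarith
    have hpt : ∀ y ∈ SB, ENNReal.ofReal (f y ^ p / ‖x - y‖ ^ ((N:ℝ) - α)) ≤
        ENNReal.ofReal (MB * ‖x - y‖ ^ (α - (N:ℝ))) := by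
      intro y hy
      obtain ⟨hy1, hyl, hyu⟩ := hy
      have hy0 : (0:ℝ) < ‖y‖ := lt_of_lt_of_le one_pos hy1
      apply ENNReal.ofReal_le_ofReal
      rw [hdiv]
      have hsy1 : (1:ℝ) ≤ s * ‖y‖ :=
        hs.le.trans (le_mul_of_one_le_right (by linarith : (0:ℝ) ≤ s) hy1)
      have hlog0 : 0 ≤ Real.log (s * ‖y‖) := Real.log_nonneg hsy1
      have ha : ‖y‖ ^ (p * γ) ≤ 2 ^ (-(p * γ)) * X ^ (p * γ) := by
        have h := Real.rpow_le_rpow_of_nonpos (by linarith : (0:ℝ) < X/2) hyl hpγ0.le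
        have heq : ((X/2):ℝ) ^ (p * γ) = 2 ^ (-(p * γ)) * X ^ (p * γ) := by
          rw [Real.div_rpow hX0.le (by norm_num : (0:ℝ) ≤ 2),
            Real.rpow_neg (by norm_num : (0:ℝ) ≤ 2)]
          ring
        exact h.trans_eq heq
      have hlog : Real.log (s * ‖y‖) ≤ (1 + Real.log 2 / Real.log s) * lX := by
        have l1 : Real.log (s * ‖y‖) ≤ Real.log (2 * (s * X)) := by
          apply Real.log_le_log (by linarith)
          calc s * ‖y‖ ≤ s * (2 * X) := mul_le_mul_of_nonneg_left hyu (by linarith)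
            _ = 2 * (s * X) := by ring
        have l2 : Real.log (2 * (s * X)) = Real.log 2 + lX := by
          rw [Real.log_mul (by norm_num) (by positivity : s * X ≠ 0), hlXdef]
        have l3 : Real.log 2 ≤ (Real.log 2 / Real.log s) * lX := by
          have := mul_le_mul_of_nonneg_left hlXL h2L
          rwa [div_mul_cancel₀ _ hL.ne'] at this
        linarith
      have hb : Real.log (s * ‖y‖) ^ (p * τ) ≤ C₂ * lX ^ (p * τ) := by
        have h := Real.rpow_le_rpow hlog0 hlog hpτ
        rwa [Real.mul_rpow (by linarith : (0:ℝ) ≤ 1 + Real.log 2 / Real.log s) hlX0.le,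
          ← hC₂] at h
      have h1 : f y ^ p ≤ MB := by
        refine (hfb y hy1).trans ?_
        calc c ^ p * ‖y‖ ^ (p * γ) * Real.log (s * ‖y‖) ^ (p * τ)
            ≤ c ^ p * (2 ^ (-(p * γ)) * X ^ (p * γ)) * (C₂ * lX ^ (p * τ)) := by
              apply mul_le_mul (mul_le_mul_of_nonneg_left ha hcp) hb
                (Real.rpow_nonneg hlog0 _)
              exact mul_nonneg hcp (mul_nonneg (Real.rpow_nonneg (by norm_num) _)
                (Real.rpow_nonneg hX0.le _))
          _ = MB := by rw [hMB]; ring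
      exact mul_le_mul_of_nonneg_right h1 (Real.rpow_nonneg (norm_nonneg _) _)
    have hmxy : Measurable fun y : EuclideanSpace ℝ (Fin N) =>
        ENNReal.ofReal (‖x - y‖ ^ (α - (N:ℝ))) := by fun_prop
    have hpre : (fun z : EuclideanSpace ℝ (Fin N) => (3 * X) • z) ⁻¹'
        closedBall (0 : EuclideanSpace ℝ (Fin N)) (3 * X) =
        closedBall (0 : EuclideanSpace ℝ (Fin N)) 1 := by
      ext z
      simp only [Set.mem_preimage, mem_closedBall, dist_zero_right, norm_smul,
        Real.norm_eq_abs, abs_of_pos h3X0]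
      constructor
      · intro h; exact (mul_le_iff_le_one_right h3X0).mp h
      · intro h; exact (mul_le_iff_le_one_right h3X0).mpr h
    calc ∫⁻ y in SB, ENNReal.ofReal (f y ^ p / ‖x - y‖ ^ ((N : ℝ) - α))
        ≤ ∫⁻ y in SB, ENNReal.ofReal (MB * ‖x - y‖ ^ (α - (N:ℝ))) := setLIntegral_mono' hSB hpt
      _ = ENNReal.ofReal MB * ∫⁻ y in SB, ENNReal.ofReal (‖x - y‖ ^ (α - (N:ℝ))) := by
          simp_rw [ENNReal.ofReal_mul hMB0]
          rw [lintegral_const_mul _ hmxy]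
      _ ≤ ENNReal.ofReal MB * ∫⁻ y in closedBall x (3 * X),
            ENNReal.ofReal (‖x - y‖ ^ (α - (N:ℝ))) := by
          gcongr
          intro y hy
          simp only [mem_closedBall, dist_eq_norm]
          have h := norm_sub_le y x
          linarith [hy.2.2]
      _ = ENNReal.ofReal MB * ∫⁻ z in closedBall (0 : EuclideanSpace ℝ (Fin N)) (3 * X),
            ENNReal.ofReal (‖z‖ ^ (α - (N:ℝ))) := by
          rw [aux_translate N x (3 * X) (α - (N:ℝ))]
      _ = ENNReal.ofReal MB * (ENNReal.ofReal ((3 * X) ^ ((N:ℝ) + (α - (N:ℝ)))) *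
            ∫⁻ z in closedBall (0 : EuclideanSpace ℝ (Fin N)) 1,
              ENNReal.ofReal (‖z‖ ^ (α - (N:ℝ)))) := by
          rw [aux_scale N (α - (N:ℝ)) h3X0 _ measurableSet_closedBall, hpre]
      _ ≤ ENNReal.ofReal MB * (ENNReal.ofReal ((3 * X) ^ ((N:ℝ) + (α - (N:ℝ)))) *
            ENNReal.ofReal KB) := by
          gcongr
          exact (ENNReal.ofReal_toReal hK₂.ne).symm.le
      _ = ENNReal.ofReal (MB * (3 * X) ^ ((N:ℝ) + (α - (N:ℝ))) * KB) := by
          rw [ENNReal.ofReal_mul (mul_nonneg hMB0 (Real.rpow_nonneg h3X0.le _)),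
            ENNReal.ofReal_mul hMB0, mul_assoc]
      _ ≤ ENNReal.ofReal (CB * X ^ (α + p * γ) * lX ^ (p * τ)) := by
          apply ENNReal.ofReal_le_ofReal
          apply le_of_eq
          have he : (N:ℝ) + (α - (N:ℝ)) = α := by ring
          have hXe : X ^ (p * γ) * X ^ α = X ^ (α + p * γ) := by
            rw [← Real.rpow_add hX0]; congr 1; ring
          rw [he, Real.mul_rpow (by norm_num : (0:ℝ) ≤ 3) hX0.le, hMB, hCB, ← hXe]; ring
  have hbodyC : ∫⁻ y in SC, ENNReal.ofReal (f y ^ p / ‖x - y‖ ^ ((N : ℝ) - α)) ≤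
      ENNReal.ofReal (CC * X ^ (α + p * γ) * lX ^ (p * τ)) := by
    set MC : ℝ := c ^ p * 2 ^ ((N:ℝ) - α) * X ^ (α - (N:ℝ)) * lX ^ (p * τ) with hMC
    have hMC0 : 0 ≤ MC :=
      mul_nonneg (mul_nonneg (mul_nonneg hcp (Real.rpow_nonneg (by norm_num) _))
        (Real.rpow_nonneg hX0.le _)) (Real.rpow_nonneg hlX0.le _)
    have hpt : ∀ y ∈ SC, ENNReal.ofReal (f y ^ p / ‖x - y‖ ^ ((N:ℝ) - α)) ≤
        ENNReal.ofReal (MC * ‖y‖ ^ (p * γ)) := by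
      intro y hy
      obtain ⟨hy1, hyu⟩ := hy
      have hy0 : (0:ℝ) < ‖y‖ := lt_of_lt_of_le one_pos hy1
      apply ENNReal.ofReal_le_ofReal
      rw [hdiv]
      have hsy1 : (1:ℝ) ≤ s * ‖y‖ :=
        hs.le.trans (le_mul_of_one_le_right (by linarith : (0:ℝ) ≤ s) hy1)
      have hlog0 : 0 ≤ Real.log (s * ‖y‖) := Real.log_nonneg hsy1
      have hlog : Real.log (s * ‖y‖) ≤ lX := by
        rw [hlXdef]
        apply Real.log_le_log (by linarith)
        have : ‖y‖ ≤ X := by linarith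
        exact mul_le_mul_of_nonneg_left this (by linarith)
      have h1 : f y ^ p ≤ c ^ p * ‖y‖ ^ (p*γ) * lX ^ (p*τ) := by
        refine (hfb y hy1).trans ?_
        exact mul_le_mul_of_nonneg_left (Real.rpow_le_rpow hlog0 hlog hpτ)
          (mul_nonneg hcp (Real.rpow_nonneg hy0.le _))
      have hxy : X/2 ≤ ‖x - y‖ := by
        have h := norm_sub_norm_le x y
        linarith
      have h2 : ‖x - y‖ ^ (α - (N:ℝ)) ≤ 2 ^ ((N:ℝ)-α) * X ^ (α-(N:ℝ)) := by
        have h3 : ‖x - y‖ ^ (α - (N:ℝ)) ≤ (X/2) ^ (α-(N:ℝ)) :=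
          Real.rpow_le_rpow_of_nonpos (by linarith) hxy (by linarith)
        have h4 : ((X/2):ℝ) ^ (α-(N:ℝ)) = 2 ^ ((N:ℝ)-α) * X ^ (α-(N:ℝ)) := by
          rw [Real.div_rpow hX0.le (by norm_num : (0:ℝ) ≤ 2),
            show (N:ℝ) - α = -(α - (N:ℝ)) by ring, Real.rpow_neg (by norm_num : (0:ℝ) ≤ 2)]
          ring
        exact h3.trans_eq h4
      calc f y ^ p * ‖x - y‖ ^ (α - (N:ℝ))
          ≤ (c ^ p * ‖y‖ ^ (p*γ) * lX ^ (p*τ)) * (2 ^ ((N:ℝ)-α) * X ^ (α-(N:ℝ))) := by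
            apply mul_le_mul h1 h2 (Real.rpow_nonneg (norm_nonneg _) _)
            exact mul_nonneg (mul_nonneg hcp (Real.rpow_nonneg hy0.le _))
              (Real.rpow_nonneg hlX0.le _)
        _ = MC * ‖y‖ ^ (p * γ) := by rw [hMC]; ring
    have hpre : (fun z : EuclideanSpace ℝ (Fin N) => X • z) ⁻¹'
        closedBall (0 : EuclideanSpace ℝ (Fin N)) X =
        closedBall (0 : EuclideanSpace ℝ (Fin N)) 1 := by
      ext z
      simp only [Set.mem_preimage, mem_closedBall, dist_zero_right, norm_smul,
        Real.norm_eq_abs, abs_of_pos hX0]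
      constructor
      · intro h; exact (mul_le_iff_le_one_right hX0).mp h
      · intro h; exact (mul_le_iff_le_one_right hX0).mpr h
    calc ∫⁻ y in SC, ENNReal.ofReal (f y ^ p / ‖x - y‖ ^ ((N : ℝ) - α))
        ≤ ∫⁻ y in SC, ENNReal.ofReal (MC * ‖y‖ ^ (p * γ)) := setLIntegral_mono' hSC hpt
      _ = ENNReal.ofReal MC * ∫⁻ y in SC, ENNReal.ofReal (‖y‖ ^ (p * γ)) := by
          simp_rw [ENNReal.ofReal_mul hMC0]
          rw [lintegral_const_mul _ (aux_meas N _)]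
      _ ≤ ENNReal.ofReal MC * ∫⁻ y in closedBall (0 : EuclideanSpace ℝ (Fin N)) X,
            ENNReal.ofReal (‖y‖ ^ (p * γ)) := by
          gcongr
          intro y hy
          simp only [mem_closedBall, dist_zero_right]
          linarith [hy.2]
      _ = ENNReal.ofReal MC * (ENNReal.ofReal (X ^ ((N:ℝ) + p * γ)) *
            ∫⁻ z in closedBall (0 : EuclideanSpace ℝ (Fin N)) 1,
              ENNReal.ofReal (‖z‖ ^ (p * γ))) := by
          rw [aux_scale N (p * γ) hX0 _ measurableSet_closedBall, hpre]
      _ ≤ ENNReal.ofReal MC * (ENNReal.ofReal (X ^ ((N:ℝ) + p * γ)) * ENNReal.ofReal KC) := by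
          gcongr
          exact (ENNReal.ofReal_toReal hK₃.ne).symm.le
      _ = ENNReal.ofReal (MC * X ^ ((N:ℝ) + p * γ) * KC) := by
          rw [ENNReal.ofReal_mul (mul_nonneg hMC0 (Real.rpow_nonneg hX0.le _)),
            ENNReal.ofReal_mul hMC0, mul_assoc]
      _ ≤ ENNReal.ofReal (CC * X ^ (α + p * γ) * lX ^ (p * τ)) := by
          apply ENNReal.ofReal_le_ofReal
          apply le_of_eq
          have hXe : X ^ (α - (N:ℝ)) * X ^ ((N:ℝ) + p * γ) = X ^ (α + p * γ) := by
            rw [← Real.rpow_add hX0]; congr 1; ring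
          rw [hMC, hCC, ← hXe]; ring
  have hT0 : 0 ≤ X ^ (α + p * γ) * lX ^ (p * τ) :=
    mul_nonneg (Real.rpow_nonneg hX0.le _) (Real.rpow_nonneg hlX0.le _)
  calc ∫⁻ y in {y : EuclideanSpace ℝ (Fin N) | 1 ≤ ‖y‖},
        ENNReal.ofReal (f y ^ p / ‖x - y‖ ^ ((N : ℝ) - α))
      ≤ ∫⁻ y in SA ∪ (SB ∪ SC), ENNReal.ofReal (f y ^ p / ‖x - y‖ ^ ((N : ℝ) - α)) :=
        lintegral_mono_set hcover
    _ ≤ (∫⁻ y in SA, ENNReal.ofReal (f y ^ p / ‖x - y‖ ^ ((N : ℝ) - α))) +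
        ∫⁻ y in SB ∪ SC, ENNReal.ofReal (f y ^ p / ‖x - y‖ ^ ((N : ℝ) - α)) :=
        lintegral_union_le _ _ _
    _ ≤ (∫⁻ y in SA, ENNReal.ofReal (f y ^ p / ‖x - y‖ ^ ((N : ℝ) - α))) +
        ((∫⁻ y in SB, ENNReal.ofReal (f y ^ p / ‖x - y‖ ^ ((N : ℝ) - α))) +
         ∫⁻ y in SC, ENNReal.ofReal (f y ^ p / ‖x - y‖ ^ ((N : ℝ) - α))) := by
        gcongr
        exact lintegral_union_le _ _ _
    _ ≤ ENNReal.ofReal (CA * X ^ (α + p * γ) * lX ^ (p * τ)) +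
        (ENNReal.ofReal (CB * X ^ (α + p * γ) * lX ^ (p * τ)) +
         ENNReal.ofReal (CC * X ^ (α + p * γ) * lX ^ (p * τ))) := by
        gcongr
    _ ≤ ENNReal.ofReal ((CA + CB + CC + 1) * X ^ (α + p * γ) * lX ^ (p * τ)) := by
        have hn : ∀ D : ℝ, 0 ≤ D → 0 ≤ D * X ^ (α + p * γ) * lX ^ (p * τ) := fun D hD =>
          mul_nonneg (mul_nonneg hD (Real.rpow_nonneg hX0.le _)) (Real.rpow_nonneg hlX0.le _)
        rw [← ENNReal.ofReal_add (hn CB hCB0) (hn CC hCC0),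
          ← ENNReal.ofReal_add (hn CA hCA0) (add_nonneg (hn CB hCB0) (hn CC hCC0))]
        apply ENNReal.ofReal_le_ofReal
        have h1 : CA * X ^ (α + p * γ) * lX ^ (p * τ) + (CB * X ^ (α + p * γ) * lX ^ (p * τ) +
            CC * X ^ (α + p * γ) * lX ^ (p * τ)) =
            (CA + CB + CC) * X ^ (α + p * γ) * lX ^ (p * τ) := by ring
        rw [h1]
        exact mul_le_mul_of_nonneg_right (mul_le_mul_of_nonneg_right (by linarith)
          (Real.rpow_nonneg hX0.le _)) (Real.rpow_nonneg hlX0.le _)
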